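/- Let N ≥ 1 be an integer. For j = 1, …, N let a_j, b_j, c_j, d_j be complex numbers, and for nonzero complex numbers e_1, …, e_N define the 2×2 matrices Δ_j = [[a_j, b_j·e_j],[c_j·e_j^{-1}, d_j]]. Then there exist complex numbers A_J, B_J, C_J, D_J, indexed by the strictly increasing even-length tuples J = (j_1 < j_2 < ⋯ < j_{2a}) with entries in {1,…,N} and 0 ≤ a ≤ ⌊N/2⌋ (a = 0 giving the empty tuple), which depend only on N and on the numbers a_k, b_k, c_k, d_k (1 ≤ k ≤ N) and NOT on e_1, …, e_N, such that for every choice of nonzero e_1, …, e_N one has the expansion Δ_N·Δ_{N−1}⋯Δ_1 = Σ_{a=0}^{⌊N/2⌋} Σ_{J ∈ B_{a;N}} [[A_J, e_N·B_J],[e_N^{-1}·C_J, D_J]] · diag(ρ_J, ρ_J^{-1}), where ρ_J = (e_{j_2}·e_{j_4}⋯e_{j_{2a}})/(e_{j_1}·e_{j_3}⋯e_{j_{2a−1}}) (and ρ_J = 1 for the empty tuple). -/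

import Mathlib

noncomputable def rhoN (e : ℕ → ℂ) (S : Finset ℕ) : ℂ :=
  ((((S.sort (· ≤ ·)).zipIdx).map Prod.swap).map
    (fun p => if p.1 % 2 = 1 then e p.2 else (e p.2)⁻¹)).prod

lemma sort_insert_max {S : Finset ℕ} {n : ℕ} (h : ∀ x ∈ S, x < n) :
    (insert n S).sort (· ≤ ·) = S.sort (· ≤ ·) ++ [n] := by
  have hn : n ∉ S := fun hm => lt_irrefl n (h n hm)
  refine (fun hp hs => List.Perm.eq_of_pairwise' (Finset.pairwise_sort _ _) hs hp) ?_ ?_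
  · exact ((Finset.sort_perm_toList _ _).trans
      ((Finset.toList_insert hn).trans
        (((Finset.sort_perm_toList _ _).symm.cons n).trans
          (List.perm_append_singleton _ _).symm)))
  · rw [List.pairwise_append]
    refine ⟨Finset.pairwise_sort _ _, List.pairwise_singleton _ _, ?_⟩
    intro x hx y hy
    simp only [List.mem_singleton] at hy
    subst hy
    exact (h x (by simpa using hx)).le

lemma rhoN_insert (e : ℕ → ℂ) {S : Finset ℕ} {n : ℕ} (h : ∀ x ∈ S, x < n) :
    rhoN e (insert n S) = rhoN e S * (if S.card % 2 = 1 then e n else (e n)⁻¹) := by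
  unfold rhoN
  rw [sort_insert_max h, List.zipIdx_append, List.map_append, List.map_append, List.prod_append]
  congr 2
  simp [Finset.length_sort]

lemma rhoN_ne_zero (e : ℕ → ℂ) (he : ∀ j, e j ≠ 0) (S : Finset ℕ) : rhoN e S ≠ 0 := by
  unfold rhoN
  apply List.prod_ne_zero
  intro hx
  simp only [List.mem_map] at hx
  obtain ⟨p, -, hp⟩ := hx
  revert hp
  split
  · exact fun h => he _ h
  · exact fun h => inv_ne_zero (he _) h


lemma symmDiff_pair_mem {S : Finset ℕ} {m n : ℕ} (hmn : m < n) (hnS : n ∉ S) (hmS : m ∈ S) :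
    symmDiff S {m, n} = insert n (S.erase m) := by
  ext x
  simp only [Finset.mem_symmDiff, Finset.mem_insert, Finset.mem_erase, Finset.mem_singleton]
  rcases eq_or_ne x m with rfl | hxm <;> rcases eq_or_ne x n with rfl | hxn <;>
    simp_all <;> omega

lemma symmDiff_pair_not_mem {S : Finset ℕ} {m n : ℕ} (hmn : m < n) (hnS : n ∉ S) (hmS : m ∉ S) :
    symmDiff S {m, n} = insert n (insert m S) := by
  ext x
  simp only [Finset.mem_symmDiff, Finset.mem_insert, Finset.mem_singleton]
  rcases eq_or_ne x m with rfl | hxm <;> rcases eq_or_ne x n with rfl | hxn <;>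
    simp_all <;> omega

-- forward lemma
lemma forward {N : ℕ} (hN : 1 ≤ N) {S : Finset ℕ} (hS : S ⊆ Finset.range N)
    (hcard : Even S.card) (e : ℕ → ℂ) (he : ∀ j, e j ≠ 0) :
    rhoN e (symmDiff S {N - 1, N}) = rhoN e S * (e (N - 1))⁻¹ * e N ∧
    Even (symmDiff S {N - 1, N}).card ∧
    symmDiff S {N - 1, N} ⊆ Finset.range (N + 1) ∧
    N ∈ symmDiff S {N - 1, N} := by
  have hmn : N - 1 < N := by omega
  have hS' : ∀ x ∈ S, x < N := fun x hx => Finset.mem_range.mp (hS hx)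
  have hnS : N ∉ S := fun h => lt_irrefl N (hS' N h)
  by_cases hm : N - 1 ∈ S
  · rw [symmDiff_pair_mem hmn hnS hm]
    have hT : ∀ x ∈ S.erase (N - 1), x < N - 1 := by
      intro x hx
      have := hS' x (Finset.mem_of_mem_erase hx)
      have := Finset.ne_of_mem_erase hx
      omega
    have hT' : ∀ x ∈ S.erase (N - 1), x < N := fun x hx => lt_of_lt_of_le (hT x hx) (by omega)
    have hcT : (S.erase (N - 1)).card = S.card - 1 := Finset.card_erase_of_mem hm
    have hpos : 1 ≤ S.card := Finset.card_pos.mpr ⟨_, hm⟩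
    have hodd : (S.erase (N - 1)).card % 2 = 1 := by
      rw [hcT]; rw [Nat.even_iff] at hcard; omega
    have hSi : S = insert (N - 1) (S.erase (N - 1)) := (Finset.insert_erase hm).symm
    have h1 : rhoN e S = rhoN e (S.erase (N - 1)) * e (N - 1) := by
      conv_lhs => rw [hSi]
      rw [rhoN_insert e hT, if_pos hodd]
    rw [rhoN_insert e hT', if_pos hodd, h1]
    refine ⟨by field_simp [he (N-1)], ?_, ?_, Finset.mem_insert_self _ _⟩
    · rw [Finset.card_insert_of_notMem (fun h => lt_irrefl N (hT' N h)), hcT]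
      rw [Nat.even_iff] at hcard ⊢; omega
    · intro x hx
      rcases Finset.mem_insert.mp hx with rfl | hx
      · simp
      · exact Finset.mem_range.mpr (by have := hT' x hx; omega)
  · rw [symmDiff_pair_not_mem hmn hnS hm]
    have hT : ∀ x ∈ S, x < N - 1 := by
      intro x hx; have := hS' x hx; have : x ≠ N - 1 := fun h => hm (h ▸ hx); omega
    have hT' : ∀ x ∈ insert (N - 1) S, x < N := by
      intro x hx; rcases Finset.mem_insert.mp hx with rfl | hx
      · omega
      · exact hS' x hx
    have heven : S.card % 2 = 0 := Nat.even_iff.mp hcard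
    have hci : (insert (N - 1) S).card = S.card + 1 := Finset.card_insert_of_notMem hm
    have hodd : (insert (N - 1) S).card % 2 = 1 := by rw [hci]; omega
    rw [rhoN_insert e hT', if_pos hodd, rhoN_insert e hT, if_neg (by omega)]
    refine ⟨by ring, ?_, ?_, Finset.mem_insert_self _ _⟩
    · rw [Finset.card_insert_of_notMem (fun h => lt_irrefl N (hT' N h)), hci]
      rw [Nat.even_iff]; omega
    · intro x hx
      rcases Finset.mem_insert.mp hx with rfl | hx
      · simp
      · exact Finset.mem_range.mpr (by have := hT' x hx; omega)

-- backward lemma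
lemma backward {N : ℕ} (hN : 1 ≤ N) {S' : Finset ℕ} (h1 : S' ⊆ Finset.range (N + 1))
    (h2 : Even S'.card) (h3 : N ∈ S') :
    symmDiff S' {N - 1, N} ⊆ Finset.range N ∧ Even (symmDiff S' {N - 1, N}).card := by
  have hlt : ∀ x ∈ S', x < N + 1 := fun x hx => Finset.mem_range.mp (h1 hx)
  constructor
  · intro x hx
    rw [Finset.mem_symmDiff] at hx
    rcases hx with ⟨hxS, hxu⟩ | ⟨hxu, hxS⟩
    · simp only [Finset.mem_insert, Finset.mem_singleton, not_or] at hxu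
      exact Finset.mem_range.mpr (by have := hlt x hxS; omega)
    · simp only [Finset.mem_insert, Finset.mem_singleton] at hxu
      rcases hxu with rfl | rfl
      · exact Finset.mem_range.mpr (by omega)
      · exact absurd h3 hxS
  · by_cases hm : N - 1 ∈ S'
    · have hsub : ({N - 1, N} : Finset ℕ) ⊆ S' := by
        intro x hx; simp only [Finset.mem_insert, Finset.mem_singleton] at hx
        rcases hx with rfl | rfl <;> assumption
      have hcard2 : 2 ≤ S'.card := by
        have := Finset.card_le_card hsub
        rwa [Finset.card_pair (by omega : N - 1 ≠ N)] at this
      have : symmDiff S' {N - 1, N} = S' \ {N - 1, N} := by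
        rw [symmDiff_def]
        have : ({N - 1, N} : Finset ℕ) \ S' = ∅ := Finset.sdiff_eq_empty_iff_subset.mpr hsub
        simp [this, Finset.sup_eq_union]
      rw [this, Finset.card_sdiff_of_subset hsub, Finset.card_pair (by omega : N - 1 ≠ N)]
      rw [Nat.even_iff] at h2 ⊢; omega
    · have hne : N - 1 ≠ N := by omega
      have : symmDiff S' {N - 1, N} = insert (N - 1) (S'.erase N) := by
        ext x
        simp only [Finset.mem_symmDiff, Finset.mem_insert, Finset.mem_erase, Finset.mem_singleton]
        have k1 : x = N → x ∈ S' := fun h => h ▸ h3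
        have k2 : x = N - 1 → x ∉ S' := fun h => h ▸ hm
        tauto
      rw [this, Finset.card_insert_of_notMem (fun hc => hm (Finset.mem_of_mem_erase hc)), Finset.card_erase_of_mem h3]
      have hpos : 1 ≤ S'.card := Finset.card_pos.mpr ⟨_, h3⟩
      rw [Nat.even_iff] at h2 ⊢; omega


lemma diag_two (x y : ℂ) : Matrix.diagonal ![x, y] = !![x, 0; 0, y] := by
  ext i j
  fin_cases i <;> fin_cases j <;> simp [Matrix.diagonal]

lemma step_matrix (aN bN cN dN AS BS CS DS em en ρ : ℂ)
    (hem : em ≠ 0) (hen : en ≠ 0) (hρ : ρ ≠ 0) :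
    !![aN, bN * en; cN * en⁻¹, dN] * (!![AS, em * BS; em⁻¹ * CS, DS] * Matrix.diagonal ![ρ, ρ⁻¹])
    = !![aN * AS, en * (bN * DS); en⁻¹ * (cN * AS), dN * DS] * Matrix.diagonal ![ρ, ρ⁻¹]
      + !![bN * CS, en * (aN * BS); en⁻¹ * (dN * CS), cN * BS] *
          Matrix.diagonal ![ρ * em⁻¹ * en, (ρ * em⁻¹ * en)⁻¹] := by
  rw [diag_two, diag_two]
  ext i j
  fin_cases i <;> fin_cases j <;>
    · simp [Matrix.mul_apply, Fin.sum_univ_succ]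
      field_simp <;> ring


lemma rhoN_empty (e : ℕ → ℂ) : rhoN e ∅ = 1 := by simp [rhoN]

set_option maxHeartbeats 1000000 in
lemma key (N : ℕ) (hN : 1 ≤ N) (a b c d : ℕ → ℂ) :
    ∃ A B C D : Finset ℕ → ℂ, ∀ e : ℕ → ℂ, (∀ j, e j ≠ 0) →
      (((List.range N).map (fun k =>
          (!![a k, b k * e k; c k * (e k)⁻¹, d k] : Matrix (Fin 2) (Fin 2) ℂ))).reverse).prod
      = ∑ S ∈ (Finset.range N).powerset.filter (fun S => Even S.card),
          !![A S, e (N - 1) * B S; (e (N - 1))⁻¹ * C S, D S] *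
            Matrix.diagonal ![rhoN e S, (rhoN e S)⁻¹] := by
  induction N, hN using Nat.le_induction with
  | base =>
    refine ⟨fun _ => a 0, fun _ => b 0, fun _ => c 0, fun _ => d 0, fun e he => ?_⟩
    have hfilter : ((Finset.range 1).powerset.filter (fun S => Even S.card))
        = ({∅} : Finset (Finset ℕ)) := by decide
    rw [hfilter, Finset.sum_singleton, rhoN_empty]
    have h1 : ((1:ℂ))⁻¹ = 1 := inv_one
    rw [h1]
    have h2 : ![(1:ℂ), 1] = fun _ => 1 := by funext i; fin_cases i <;> rfl
    rw [h2, Matrix.diagonal_one, mul_one]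
    have h3 : List.range 1 = [0] := by decide
    rw [h3]
    simp only [List.map_cons, List.map_nil, List.reverse_singleton, List.prod_cons,
      List.prod_nil, mul_one]
    ext i j
    fin_cases i <;> fin_cases j <;> simp [mul_comm]
  | succ N hN ih =>
    obtain ⟨A, B, C, D, hIH⟩ := ih
    classical
    refine ⟨fun S => if N ∈ S then b N * C (symmDiff S {N - 1, N}) else a N * A S,
            fun S => if N ∈ S then a N * B (symmDiff S {N - 1, N}) else b N * D S,
            fun S => if N ∈ S then d N * C (symmDiff S {N - 1, N}) else c N * A S,
            fun S => if N ∈ S then c N * B (symmDiff S {N - 1, N}) else d N * D S,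
            fun e he => ?_⟩
    have hNsub : N + 1 - 1 = N := by omega
    rw [hNsub]
    -- LHS
    rw [List.range_succ, List.map_append, List.reverse_append]
    simp only [List.map_cons, List.map_nil, List.reverse_cons, List.reverse_nil,
      List.nil_append, List.singleton_append, List.prod_cons]
    rw [hIH e he, Finset.mul_sum]
    -- RHS split
    rw [← Finset.sum_filter_add_sum_filter_not
      ((Finset.range (N + 1)).powerset.filter (fun S => Even S.card)) (fun S => N ∉ S)]
    have hset : ((Finset.range (N + 1)).powerset.filter (fun S => Even S.card)).filter
        (fun S => N ∉ S) = (Finset.range N).powerset.filter (fun S => Even S.card) := by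
      ext S
      simp only [Finset.mem_filter, Finset.mem_powerset]
      constructor
      · rintro ⟨⟨hsub, hev⟩, hN'⟩
        refine ⟨fun x hx => Finset.mem_range.mpr ?_, hev⟩
        have h1 := Finset.mem_range.mp (hsub hx)
        have h2 : x ≠ N := fun h => hN' (h ▸ hx)
        omega
      · rintro ⟨hsub, hev⟩
        have h1 : ∀ x ∈ S, x < N := fun x hx => Finset.mem_range.mp (hsub hx)
        exact ⟨⟨fun x hx => Finset.mem_range.mpr (by have := h1 x hx; omega), hev⟩,
          fun h => lt_irrefl N (h1 N h)⟩
    rw [hset]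
    have hbij : (((Finset.range (N + 1)).powerset.filter (fun S => Even S.card)).filter
          (fun S => ¬ N ∉ S)).sum
          (fun S => !![(if N ∈ S then b N * C (symmDiff S {N - 1, N}) else a N * A S),
              e N * (if N ∈ S then a N * B (symmDiff S {N - 1, N}) else b N * D S);
              (e N)⁻¹ * (if N ∈ S then d N * C (symmDiff S {N - 1, N}) else c N * A S),
              (if N ∈ S then c N * B (symmDiff S {N - 1, N}) else d N * D S)] *
            Matrix.diagonal ![rhoN e S, (rhoN e S)⁻¹])
        = ((Finset.range N).powerset.filter (fun S => Even S.card)).sum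
          (fun S => !![b N * C S, e N * (a N * B S); (e N)⁻¹ * (d N * C S), c N * B S] *
            Matrix.diagonal ![rhoN e S * (e (N - 1))⁻¹ * e N,
              (rhoN e S * (e (N - 1))⁻¹ * e N)⁻¹]) := by
      refine (Finset.sum_nbij' (fun S => symmDiff S {N - 1, N})
        (fun S => symmDiff S {N - 1, N}) ?_ ?_ ?_ ?_ ?_).symm
      · intro S hS
        simp only [Finset.mem_filter, Finset.mem_powerset] at hS ⊢
        obtain ⟨hsub, hev⟩ := hS
        obtain ⟨-, h2, h3, h4⟩ := forward hN hsub hev e he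
        exact ⟨⟨h3, h2⟩, by simpa using h4⟩
      · intro S hS
        simp only [Finset.mem_filter, Finset.mem_powerset, not_not] at hS
        obtain ⟨⟨hsub, hev⟩, hNS⟩ := hS
        obtain ⟨h1, h2⟩ := backward hN hsub hev hNS
        exact Finset.mem_filter.mpr ⟨Finset.mem_powerset.mpr h1, h2⟩
      · intro S _; exact symmDiff_symmDiff_cancel_right {N - 1, N} S
      · intro S _; exact symmDiff_symmDiff_cancel_right {N - 1, N} S
      · intro S hS
        simp only [Finset.mem_filter, Finset.mem_powerset] at hS
        obtain ⟨hsub, hev⟩ := hS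
        obtain ⟨hrho, -, -, hNmem⟩ := forward hN hsub hev e he
        rw [hrho, if_pos hNmem, if_pos hNmem, if_pos hNmem, if_pos hNmem,
          symmDiff_symmDiff_cancel_right]
    rw [hbij, ← Finset.sum_add_distrib]
    refine Finset.sum_congr rfl ?_
    intro S hS
    simp only [Finset.mem_filter, Finset.mem_powerset] at hS
    obtain ⟨hsub, hev⟩ := hS
    have hNS : N ∉ S := fun h => lt_irrefl N (Finset.mem_range.mp (hsub h))
    rw [if_neg hNS, if_neg hNS, if_neg hNS, if_neg hNS]
    exact step_matrix (a N) (b N) (c N) (d N) (A S) (B S) (C S) (D S)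
      (e (N - 1)) (e N) (rhoN e S) (he _) (he _) (rhoN_ne_zero e he S)


lemma toList_map_perm {N : ℕ} (S : Finset (Fin N)) :
    (S.map Fin.valEmbedding).toList.Perm (S.toList.map Fin.val) := by
  rw [← Multiset.coe_eq_coe]
  simp only [Finset.toList, Finset.map_val, Multiset.coe_toList, ← Multiset.map_coe,
    Multiset.coe_toList]
  rfl

lemma sort_map {N : ℕ} (S : Finset (Fin N)) :
    (S.map Fin.valEmbedding).sort (· ≤ ·) = (S.sort (· ≤ ·)).map Fin.val := by
  refine (fun hp hs => List.Perm.eq_of_pairwise' (Finset.pairwise_sort _ _) hs hp) ?_ ?_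
  · exact (Finset.sort_perm_toList _ _).trans
      ((toList_map_perm S).trans ((Finset.sort_perm_toList S (· ≤ ·)).symm.map Fin.val))
  · exact List.Pairwise.map Fin.val (fun {a b} (h : a ≤ b) => (h : a.val ≤ b.val)) (Finset.pairwise_sort _ _)


/-- The alternating product `ρ_J = (e_{j₂}·e_{j₄}⋯)/(e_{j₁}·e_{j₃}⋯)` attached to a
finite set `S` of indices, listed in increasing order. -/
noncomputable def rhoFactor {N : ℕ} (e : Fin N → ℂ) (S : Finset (Fin N)) : ℂ :=
  ((((S.sort (· ≤ ·)).zipIdx).map Prod.swap).map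
    (fun p => if p.1 % 2 = 1 then e p.2 else (e p.2)⁻¹)).prod

lemma rho_transfer {N : ℕ} (e : Fin N → ℂ) (e' : ℕ → ℂ)
    (hee : ∀ j : Fin N, e' j.val = e j) (S : Finset (Fin N)) :
    rhoFactor e S = rhoN e' (S.map Fin.valEmbedding) := by
  unfold rhoFactor rhoN
  rw [sort_map, List.zipIdx_map]
  simp only [List.map_map]
  refine congrArg List.prod (List.map_congr_left ?_)
  intro p _
  simp [Prod.map, hee]

set_option maxHeartbeats 1000000 in
/-- Lemma B.1: the product `Δ_N ⋯ Δ_1` of matrices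
`Δ_j = [[a_j, b_j e_j],[c_j e_j⁻¹, d_j]]` expands as a sum, over strictly increasing
even-length tuples `J` (i.e. even-cardinality subsets `S` of indices), of
`[[A_J, e_N B_J],[e_N⁻¹ C_J, D_J]] · diag(ρ_J, ρ_J⁻¹)` with coefficients independent
of `e₁,…,e_N`. -/
theorem statement0 (N : ℕ) (hN : 1 ≤ N) (a b c d : Fin N → ℂ) :
    ∃ A B C D : Finset (Fin N) → ℂ,
      ∀ e : Fin N → ℂ, (∀ j, e j ≠ 0) →
        (List.ofFn (fun j : Fin N =>
          (!![a j, b j * e j; c j * (e j)⁻¹, d j] : Matrix (Fin 2) (Fin 2) ℂ))).reverse.prod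
        = ∑ S ∈ Finset.univ.filter (fun S : Finset (Fin N) => Even S.card),
            (!![A S, e ⟨N - 1, by omega⟩ * B S;
                (e ⟨N - 1, by omega⟩)⁻¹ * C S, D S] : Matrix (Fin 2) (Fin 2) ℂ) *
              Matrix.diagonal ![rhoFactor e S, (rhoFactor e S)⁻¹] := by
  classical
  set a' : ℕ → ℂ := fun k => if h : k < N then a ⟨k, h⟩ else 0 with ha'
  set b' : ℕ → ℂ := fun k => if h : k < N then b ⟨k, h⟩ else 0 with hb'
  set c' : ℕ → ℂ := fun k => if h : k < N then c ⟨k, h⟩ else 0 with hc'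
  set d' : ℕ → ℂ := fun k => if h : k < N then d ⟨k, h⟩ else 0 with hd'
  obtain ⟨A, B, C, D, hkey⟩ := key N hN a' b' c' d'
  refine ⟨fun S => A (S.map Fin.valEmbedding), fun S => B (S.map Fin.valEmbedding),
    fun S => C (S.map Fin.valEmbedding), fun S => D (S.map Fin.valEmbedding),
    fun e he => ?_⟩
  set e' : ℕ → ℂ := fun k => if h : k < N then e ⟨k, h⟩ else 1 with he'def
  have he' : ∀ k, e' k ≠ 0 := by
    intro k
    simp only [he'def]
    split
    · exact he _
    · exact one_ne_zero
  have hee : ∀ j : Fin N, e' j.val = e j := by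
    intro j
    simp only [he'def, dif_pos j.isLt, Fin.eta]
  -- LHS
  have hLHS : (List.ofFn fun j : Fin N =>
        (!![a j, b j * e j; c j * (e j)⁻¹, d j] : Matrix (Fin 2) (Fin 2) ℂ))
      = (List.range N).map (fun k =>
        (!![a' k, b' k * e' k; c' k * (e' k)⁻¹, d' k] : Matrix (Fin 2) (Fin 2) ℂ)) := by
    rw [List.ofFn_eq_map]
    have h1 : List.range N = (List.finRange N).map Fin.val := by
      simp
    rw [h1, List.map_map]
    refine List.map_congr_left ?_
    intro j _
    simp only [Function.comp, ha', hb', hc', hd', he'def, dif_pos j.isLt, Fin.eta]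
  rw [hLHS, hkey e' he']
  -- RHS
  have heN : e ⟨N - 1, by omega⟩ = e' (N - 1) := (hee ⟨N - 1, by omega⟩).symm
  symm
  refine Finset.sum_nbij' (fun S => S.map Fin.valEmbedding)
    (fun S' => Finset.univ.filter (fun x : Fin N => x.val ∈ S')) ?_ ?_ ?_ ?_ ?_
  · intro S hS
    simp only [Finset.mem_filter, Finset.mem_univ, true_and] at hS
    refine Finset.mem_filter.mpr ⟨Finset.mem_powerset.mpr ?_, by rwa [Finset.card_map]⟩
    intro x hx
    simp only [Finset.mem_map, Fin.valEmbedding_apply] at hx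
    obtain ⟨j, -, rfl⟩ := hx
    exact Finset.mem_range.mpr j.isLt
  · intro S' hS'
    simp only [Finset.mem_filter, Finset.mem_powerset] at hS'
    obtain ⟨hsub, hev⟩ := hS'
    have hmap : (Finset.univ.filter (fun x : Fin N => x.val ∈ S')).map Fin.valEmbedding
        = S' := by
      ext n
      simp only [Finset.mem_map, Finset.mem_filter, Finset.mem_univ, true_and,
        Fin.valEmbedding_apply]
      constructor
      · rintro ⟨j, hj, rfl⟩; exact hj
      · intro hn
        exact ⟨⟨n, Finset.mem_range.mp (hsub hn)⟩, hn, rfl⟩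
    refine Finset.mem_filter.mpr ⟨Finset.mem_univ _, ?_⟩
    have := Finset.card_map (Fin.valEmbedding) (s := Finset.univ.filter (fun x : Fin N => x.val ∈ S'))
    rw [hmap] at this
    exact this ▸ hev
  · intro S _
    ext j
    simp [Fin.val_inj]
  · intro S' hS'
    simp only [Finset.mem_filter, Finset.mem_powerset] at hS'
    obtain ⟨hsub, -⟩ := hS'
    ext n
    simp only [Finset.mem_map, Finset.mem_filter, Finset.mem_univ, true_and,
      Fin.valEmbedding_apply]
    constructor
    · rintro ⟨j, hj, rfl⟩; exact hj
    · intro hn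
      exact ⟨⟨n, Finset.mem_range.mp (hsub hn)⟩, hn, rfl⟩
  · intro S hS
    rw [rho_transfer e e' hee, heN]
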